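/- The inverse Motzkin matrix entries satisfy the recurrence (i−j)·m_{i,j} = −ω·i·m_{i−1,j} − (i+j)·m_{i−2,j} for 0 ≤ j ≤ i−1, with initial values m_{i,j} = δ_{i,j} for j ≥ i. -/

import Mathlib

open scoped BigOperators

/-- Inverse Motzkin matrix entries: m i j is the coefficient of t^i in
t^j * (1 + ω t + t^2)⁻¹ ^ (j+1). -/
noncomputable def minv (ω : ℚ) (i j : ℕ) : ℚ :=
  PowerSeries.coeff i ((PowerSeries.X : PowerSeries ℚ) ^ j *
    ((1 + PowerSeries.C ω * PowerSeries.X + PowerSeries.X ^ 2)⁻¹) ^ (j + 1))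

/-- Extension of minv to integer row index, vanishing for negative rows. -/
noncomputable def minvZ (ω : ℚ) (i : ℤ) (j : ℕ) : ℚ :=
  if 0 ≤ i then minv ω i.toNat j else 0

open PowerSeries

theorem minv_recurrence (ω : ℚ) :
    (∀ i j : ℕ, j + 1 ≤ i →
      ((i : ℚ) - j) * minv ω i j =
        -ω * i * minv ω (i-1) j - ((i : ℚ) + j) * minvZ ω ((i : ℤ) - 2) j) ∧
    (∀ i j : ℕ, i ≤ j → minv ω i j = if i = j then 1 else 0) := by
  set P : PowerSeries ℚ := 1 + PowerSeries.C ω * X + X ^ 2 with hPdef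
  have hc : constantCoeff P = 1 := by simp [hPdef]
  have hPh : P * P⁻¹ = 1 := PowerSeries.mul_inv_cancel _ (by rw [hc]; exact one_ne_zero)
  constructor
  · intro i j hij
    set h : PowerSeries ℚ := P⁻¹ with hhdef
    set g : PowerSeries ℚ := X ^ j * h ^ (j + 1) with hgdef
    have hminv : ∀ n : ℕ, minv ω n j = coeff n g := fun n => rfl
    have hdP : d⁄dX ℚ P = PowerSeries.C ω + 2 * X := by
      rw [hPdef, pow_two]
      rw [map_add, map_add, Derivation.leibniz, Derivation.leibniz]
      simp [smul_eq_mul]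
      ring
    have hdh : d⁄dX ℚ h = -h ^ 2 * (PowerSeries.C ω + 2 * X) := by
      rw [hhdef, PowerSeries.derivative_inv', hdP]
    have e1 : d⁄dX ℚ (h ^ (j + 1)) = -((j : ℚ⟦X⟧) + 1) * (PowerSeries.C ω + 2 * X) * h ^ (j + 2) := by
      rw [Derivation.leibniz_pow, hdh]
      simp only [Nat.succ_sub_one, smul_eq_mul, nsmul_eq_mul]
      push_cast
      ring
    have e2 : X * d⁄dX ℚ ((X : ℚ⟦X⟧) ^ j) = (j : ℚ⟦X⟧) * X ^ j := by
      cases j with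
      | zero => simp
      | succ n =>
        rw [Derivation.leibniz_pow]
        simp only [Nat.succ_sub_one, smul_eq_mul, nsmul_eq_mul, derivative_X, mul_one]
        push_cast
        ring
    have hDg : d⁄dX ℚ g = X ^ j * (-((j : ℚ⟦X⟧) + 1) * (PowerSeries.C ω + 2 * X) * h ^ (j + 2))
        + h ^ (j + 1) * d⁄dX ℚ ((X : ℚ⟦X⟧) ^ j) := by
      rw [hgdef, Derivation.leibniz, e1]
      simp only [smul_eq_mul]
    set W : PowerSeries ℚ := X * d⁄dX ℚ g with hWdef
    have key : W + PowerSeries.C ω * (X * W) + X * (X * W) =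
        (j : ℚ⟦X⟧) * (g + PowerSeries.C ω * (X * g) + X * (X * g))
        - ((j : ℚ⟦X⟧) + 1) * (PowerSeries.C ω * (X * g) + 2 * (X * (X * g))) := by
      rw [hWdef, hDg, hgdef, hhdef]
      linear_combination (PowerSeries.C ω * X + X^2 + 1) * (P⁻¹) ^ (j+1) * e2
        + (-((j : ℚ⟦X⟧) + 1) * (PowerSeries.C ω + 2 * X) * X * X ^ j * (P⁻¹) ^ (j+1)) * hPh
    have hW : ∀ n : ℕ, coeff n W = n * coeff n g := by
      intro n
      cases n with
      | zero => simp [hWdef, coeff_zero_eq_constantCoeff]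
      | succ m =>
        rw [hWdef, coeff_succ_X_mul, PowerSeries.coeff_derivative]
        push_cast
        ring
    obtain ⟨k, rfl⟩ : ∃ k, i = k + 1 := ⟨i - 1, by omega⟩
    rw [show ((j : ℕ) : ℚ⟦X⟧) = PowerSeries.C ((j : ℕ) : ℚ) from
      (map_natCast (PowerSeries.C (R := ℚ)) j).symm] at key
    rw [show (PowerSeries.C ((j:ℕ):ℚ) + 1) = PowerSeries.C (((j:ℕ):ℚ) + 1) by
      rw [map_add, map_one]] at key
    rw [show (2 : ℚ⟦X⟧) = PowerSeries.C 2 from (map_ofNat _ 2).symm] at key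
    have E := congrArg (coeff (k + 1)) key
    simp only [add_mul, map_add, map_sub, map_one, one_mul, PowerSeries.coeff_C_mul, coeff_succ_X_mul] at E
    have c0 : ∀ f : ℚ⟦X⟧, coeff 0 (X * f) = 0 := by
      intro f
      simp [coeff_zero_eq_constantCoeff]
    have hA3 : coeff k (X * W) = ((k : ℚ) - 1) * minvZ ω (((k+1 : ℕ) : ℤ) - 2) j := by
      cases k with
      | zero => rw [c0]; simp [minvZ]
      | succ m =>
        rw [coeff_succ_X_mul, hW m]
        have h1 : (((m + 1 + 1 : ℕ) : ℤ) - 2) = (m : ℤ) := by push_cast; ring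
        rw [h1]
        have h2 : minvZ ω (m : ℤ) j = coeff m g := by
          rw [minvZ, if_pos (Int.natCast_nonneg m), Int.toNat_natCast, hminv]
        rw [h2]
        push_cast
        ring
    have hB3 : coeff k (X * g) = minvZ ω (((k+1 : ℕ) : ℤ) - 2) j := by
      cases k with
      | zero => rw [c0]; simp [minvZ]
      | succ m =>
        rw [coeff_succ_X_mul]
        have h1 : (((m + 1 + 1 : ℕ) : ℤ) - 2) = (m : ℤ) := by push_cast; ring
        rw [h1, minvZ, if_pos (Int.natCast_nonneg m), Int.toNat_natCast, hminv]
    rw [hW (k+1), hW k, hA3, hB3] at E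
    simp only [Nat.add_sub_cancel]
    rw [hminv (k+1), hminv k]
    push_cast at E ⊢
    linear_combination E
  · intro i j hij
    show (coeff i) (X ^ j * _) = _
    rw [PowerSeries.coeff_X_pow_mul']
    rcases eq_or_lt_of_le hij with rfl | hlt
    · rw [if_pos le_rfl, if_pos rfl, Nat.sub_self,
        coeff_zero_eq_constantCoeff, map_pow, ← hPdef, PowerSeries.constantCoeff_inv, hc,
        inv_one, one_pow]
    · rw [if_neg (by omega), if_neg (by omega)]
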